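/- For every γ̄ ≥ 0, h₁ is differentiable at γ̄ and h₁'(γ̄) = − (Σ_{i=1}^n a_i²/(1+λ_i γ̄)²)⁻² · Σ_{i=1}^n Σ_{j=1}^n a_i² a_j² (λ_i − λ_j)² / ((1+λ_i γ̄)³ (1+λ_j γ̄)³). -/

import Mathlib

open Finset

/-- `h₁(γ̄) = (Σᵢ λᵢ aᵢ²/(1+λᵢγ̄)²) · (Σᵢ aᵢ²/(1+λᵢγ̄)²)⁻¹`. -/
noncomputable def h1 {n : ℕ} (lam a : Fin n → ℝ) (γ : ℝ) : ℝ :=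
  (∑ i, lam i * a i ^ 2 / (1 + lam i * γ) ^ 2) * (∑ i, a i ^ 2 / (1 + lam i * γ) ^ 2)⁻¹

/-- Derivative of `h₁`. For every `γ̄ ≥ 0`, `h₁` is
differentiable at `γ̄` with
`h₁'(γ̄) = −(Σᵢ aᵢ²/(1+λᵢγ̄)²)⁻² · Σᵢ Σⱼ aᵢ²aⱼ²(λᵢ−λⱼ)²/((1+λᵢγ̄)³(1+λⱼγ̄)³)`. -/
theorem stmt7 (n : ℕ) (hn : 0 < n)
    (lam : Fin n → ℝ) (hlam : ∀ i, 0 ≤ lam i)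
    (a : Fin n → ℝ) (ha : ∃ i, a i ≠ 0) :
    ∀ γ : ℝ, 0 ≤ γ →
      HasDerivAt (h1 lam a)
        (-(((∑ i, a i ^ 2 / (1 + lam i * γ) ^ 2) ^ 2)⁻¹ *
          ∑ i, ∑ j, a i ^ 2 * a j ^ 2 * (lam i - lam j) ^ 2 /
            ((1 + lam i * γ) ^ 3 * (1 + lam j * γ) ^ 3))) γ := by
  intro γ hγ
  have hc : ∀ i, (0:ℝ) < 1 + lam i * γ := fun i => by
    have := mul_nonneg (hlam i) hγ; linarith
  have hcne : ∀ i, (1 + lam i * γ) ≠ 0 := fun i => (hc i).ne'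
  set N := ∑ i, lam i * a i ^ 2 / (1 + lam i * γ) ^ 2 with hNdef
  set D := ∑ i, a i ^ 2 / (1 + lam i * γ) ^ 2 with hDdef
  set N' := ∑ i, -(2 * lam i ^ 2 * a i ^ 2) / (1 + lam i * γ) ^ 3 with hN'def
  set D' := ∑ i, -(2 * lam i * a i ^ 2) / (1 + lam i * γ) ^ 3 with hD'def
  have hD0 : 0 < D := by
    obtain ⟨i0, hi0⟩ := ha
    refine Finset.sum_pos' (fun i _ => by positivity) ⟨i0, Finset.mem_univ _, ?_⟩
    exact div_pos (pow_pos (abs_pos.mpr hi0) 2 |>.trans_eq (by rw [sq_abs])) (pow_pos (hc i0) 2)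
  have hDne : D ≠ 0 := hD0.ne'
  -- derivative of each base
  have hbase : ∀ i, HasDerivAt (fun x : ℝ => 1 + lam i * x) (lam i) γ := by
    intro i
    simpa using ((hasDerivAt_id γ).const_mul (lam i)).const_add 1
  have hN : HasDerivAt (fun x => ∑ i, lam i * a i ^ 2 / (1 + lam i * x) ^ 2) N' γ := by
    rw [hN'def]
    apply HasDerivAt.fun_sum
    intro i _
    have h := (hasDerivAt_const γ (lam i * a i ^ 2)).div ((hbase i).pow 2)
      (pow_ne_zero 2 (hcne i))
    refine h.congr_deriv (Eq.symm ?_)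
    simp only [Pi.pow_apply]
    have hi := hcne i
    rw [div_eq_div_iff (pow_ne_zero _ hi) (pow_ne_zero _ (pow_ne_zero _ hi))]
    ring
  have hD : HasDerivAt (fun x => ∑ i, a i ^ 2 / (1 + lam i * x) ^ 2) D' γ := by
    rw [hD'def]
    apply HasDerivAt.fun_sum
    intro i _
    have h := (hasDerivAt_const γ (a i ^ 2)).div ((hbase i).pow 2)
      (pow_ne_zero 2 (hcne i))
    refine h.congr_deriv (Eq.symm ?_)
    simp only [Pi.pow_apply]
    have hi := hcne i
    rw [div_eq_div_iff (pow_ne_zero _ hi) (pow_ne_zero _ (pow_ne_zero _ hi))]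
    ring
  have hprod : HasDerivAt (h1 lam a) (N' * D⁻¹ + N * (-D' / D ^ 2)) γ := by
    have := hN.fun_mul (hD.fun_inv hDne)
    exact this
  -- key algebraic identity for the double sum
  have key : N' * D - N * D' =
      -∑ i, ∑ j, a i ^ 2 * a j ^ 2 * (lam i - lam j) ^ 2 /
        ((1 + lam i * γ) ^ 3 * (1 + lam j * γ) ^ 3) := by
    set t : Fin n → Fin n → ℝ := fun i j =>
      -(2 * lam i ^ 2 * a i ^ 2) / (1 + lam i * γ) ^ 3 * (a j ^ 2 / (1 + lam j * γ) ^ 2)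
      - lam i * a i ^ 2 / (1 + lam i * γ) ^ 2 * (-(2 * lam j * a j ^ 2) / (1 + lam j * γ) ^ 3)
      with ht
    have hT : N' * D - N * D' = ∑ i, ∑ j, t i j := by
      rw [hN'def, hDdef, hNdef, hD'def, Finset.sum_mul_sum, Finset.sum_mul_sum,
        ← Finset.sum_sub_distrib]
      refine Finset.sum_congr rfl fun i _ => ?_
      rw [← Finset.sum_sub_distrib]
    have hsym : ∀ i j, t i j + t j i =
        -(2 * (a i ^ 2 * a j ^ 2 * (lam i - lam j) ^ 2 /
          ((1 + lam i * γ) ^ 3 * (1 + lam j * γ) ^ 3))) := by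
      intro i j
      rw [ht]
      have hi := hcne i
      have hj := hcne j
      field_simp
      ring
    have h2 : 2 * (∑ i, ∑ j, t i j) =
        -(2 * ∑ i, ∑ j, a i ^ 2 * a j ^ 2 * (lam i - lam j) ^ 2 /
          ((1 + lam i * γ) ^ 3 * (1 + lam j * γ) ^ 3)) := by
      have hswap : (∑ i, ∑ j, t i j) = ∑ i, ∑ j, t j i := Finset.sum_comm
      calc 2 * (∑ i, ∑ j, t i j) = (∑ i, ∑ j, t i j) + ∑ i, ∑ j, t j i := by
            rw [← hswap]; ring
        _ = ∑ i, ∑ j, (t i j + t j i) := by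
            rw [← Finset.sum_add_distrib]
            exact Finset.sum_congr rfl fun i _ => (Finset.sum_add_distrib).symm
        _ = ∑ i, ∑ j, -(2 * (a i ^ 2 * a j ^ 2 * (lam i - lam j) ^ 2 /
              ((1 + lam i * γ) ^ 3 * (1 + lam j * γ) ^ 3))) := by
            exact Finset.sum_congr rfl fun i _ => Finset.sum_congr rfl fun j _ => hsym i j
        _ = -(2 * ∑ i, ∑ j, a i ^ 2 * a j ^ 2 * (lam i - lam j) ^ 2 /
              ((1 + lam i * γ) ^ 3 * (1 + lam j * γ) ^ 3)) := by
            simp [Finset.mul_sum, Finset.sum_neg_distrib]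
    rw [hT]
    linarith
  have hval : N' * D⁻¹ + N * (-D' / D ^ 2) =
      -((D ^ 2)⁻¹ * ∑ i, ∑ j, a i ^ 2 * a j ^ 2 * (lam i - lam j) ^ 2 /
        ((1 + lam i * γ) ^ 3 * (1 + lam j * γ) ^ 3)) := by
    have : N' * D⁻¹ + N * (-D' / D ^ 2) = (N' * D - N * D') * (D ^ 2)⁻¹ := by
      field_simp
      ring
    rw [this, key]
    ring
  rw [← hval]
  exact hprod
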